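/- Let n ≥ 2 and s ≥ 1 be integers and let M = n·I_s − J_s, the s×s matrix with diagonal entries n−1 and off-diagonal entries −1. Then per(M) = (−1)^s · s! · Σ_{r=0}^{s} (−n)^r / r!. -/
import Mathlib


open Matrix

lemma card_fixing (s : ℕ) (T : Finset (Fin s)) :
    (Finset.univ.filter (fun σ : Equiv.Perm (Fin s) => ∀ i ∈ T, σ i = i)).card
      = (s - T.card).factorial := by
  rw [← Fintype.card_subtype]
  have e : {σ : Equiv.Perm (Fin s) // ∀ i ∈ T, σ i = i} ≃ Equiv.Perm {a : Fin s // a ∉ T} := by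
    refine (Equiv.subtypeEquivRight ?_).trans
      (Equiv.Perm.subtypeEquivSubtypePerm (fun a => a ∉ T)).symm
    intro σ
    constructor
    · intro h a ha; exact h a (not_not.mp ha)
    · intro h i hi; exact h i (not_not.mpr hi)
  rw [Fintype.card_congr e, Fintype.card_perm, Fintype.card_subtype_compl,
    Fintype.card_fin, Fintype.card_coe]

/-- For `M = n·I_s − J_s`, `per(M) = (−1)^s s! Σ_{r=0}^s (−n)^r / r!`. -/
theorem permanent_nI_sub_J (n s : ℕ) (hn : 2 ≤ n) (hs : 1 ≤ s) :
    ((n : ℚ) • (1 : Matrix (Fin s) (Fin s) ℚ) -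
        Matrix.of (fun _ _ => (1 : ℚ))).permanent =
      (-1 : ℚ) ^ s * (Nat.factorial s : ℚ) *
        ∑ r ∈ Finset.range (s + 1), (-(n : ℚ)) ^ r / (Nat.factorial r : ℚ) := by
  classical
  have hMeq : ((n : ℚ) • (1 : Matrix (Fin s) (Fin s) ℚ) - Matrix.of (fun _ _ => (1 : ℚ)))
      = Matrix.of (fun i j => if i = j then (n : ℚ) - 1 else -1) := by
    ext i j
    by_cases h : i = j <;>
      simp [Matrix.sub_apply, Matrix.smul_apply, Matrix.one_apply, h]
  have key : ∀ σ : Equiv.Perm (Fin s),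
      (∏ i, if σ i = i then (n : ℚ) - 1 else -1)
        = (-1 : ℚ) ^ s * ∑ T ∈ (Finset.univ : Finset (Fin s)).powerset,
            (if ∀ i ∈ T, σ i = i then (-(n : ℚ)) ^ T.card else 0) := by
    intro σ
    have h1 : (∏ i, if σ i = i then (n : ℚ) - 1 else -1)
        = (-1 : ℚ) ^ s * ∏ i ∈ Finset.univ.filter (fun i => σ i = i), ((-(n : ℚ)) + 1) := by
      calc (∏ i, if σ i = i then (n : ℚ) - 1 else -1)
          = ∏ i : Fin s, (-1 : ℚ) * (if σ i = i then (-(n : ℚ)) + 1 else 1) := by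
            refine Finset.prod_congr rfl fun i _ => ?_
            by_cases h : σ i = i <;> simp [h] <;> ring
        _ = (-1 : ℚ) ^ s * ∏ i ∈ Finset.univ.filter (fun i => σ i = i), ((-(n : ℚ)) + 1) := by
            rw [Finset.prod_mul_distrib, Finset.prod_const, Finset.card_univ, Fintype.card_fin,
              ← Finset.prod_filter]
    rw [h1, Finset.prod_add]
    congr 1
    have hps : (Finset.univ.filter (fun i => σ i = i)).powerset
        = (Finset.univ : Finset (Fin s)).powerset.filter (fun T => ∀ i ∈ T, σ i = i) := by
      ext T
      simp [Finset.mem_powerset, Finset.subset_iff]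
    rw [hps, Finset.sum_filter]
    refine Finset.sum_congr rfl fun T _ => ?_
    simp [Finset.prod_const]
  rw [hMeq, Matrix.permanent]
  calc (∑ σ : Equiv.Perm (Fin s), ∏ i,
        Matrix.of (fun i j => if i = j then (n : ℚ) - 1 else -1) (σ i) i)
      = ∑ σ : Equiv.Perm (Fin s), ∏ i, (if σ i = i then (n : ℚ) - 1 else -1) := by
        refine Finset.sum_congr rfl fun σ _ => Finset.prod_congr rfl fun i _ => ?_
        simp only [Matrix.of_apply]
    _ = ∑ σ : Equiv.Perm (Fin s), (-1 : ℚ) ^ s * ∑ T ∈ (Finset.univ : Finset (Fin s)).powerset,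
          (if ∀ i ∈ T, σ i = i then (-(n : ℚ)) ^ T.card else 0) :=
        Finset.sum_congr rfl fun σ _ => key σ
    _ = (-1 : ℚ) ^ s * ∑ T ∈ (Finset.univ : Finset (Fin s)).powerset,
          ∑ σ : Equiv.Perm (Fin s), (if ∀ i ∈ T, σ i = i then (-(n : ℚ)) ^ T.card else 0) := by
        rw [← Finset.mul_sum]
        congr 1
        exact Finset.sum_comm
    _ = (-1 : ℚ) ^ s * ∑ T ∈ (Finset.univ : Finset (Fin s)).powerset,
          ((-(n : ℚ)) ^ T.card * (Nat.factorial (s - T.card) : ℚ)) := by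
        congr 1
        refine Finset.sum_congr rfl fun T _ => ?_
        rw [Finset.sum_ite, Finset.sum_const, Finset.sum_const_zero, add_zero,
          card_fixing s T, nsmul_eq_mul, mul_comm]
    _ = (-1 : ℚ) ^ s * ∑ r ∈ Finset.range (s + 1),
          (s.choose r) • ((-(n : ℚ)) ^ r * (Nat.factorial (s - r) : ℚ)) := by
        rw [Finset.sum_powerset_apply_card
          (fun m => (-(n : ℚ)) ^ m * (Nat.factorial (s - m) : ℚ)), Finset.card_univ,
          Fintype.card_fin]
    _ = (-1 : ℚ) ^ s * (Nat.factorial s : ℚ) *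
          ∑ r ∈ Finset.range (s + 1), (-(n : ℚ)) ^ r / (Nat.factorial r : ℚ) := by
        rw [mul_assoc]
        congr 1
        rw [Finset.mul_sum]
        refine Finset.sum_congr rfl fun r hr => ?_
        rw [Finset.mem_range, Nat.lt_succ_iff] at hr
        have hc : (s.choose r : ℚ) * (Nat.factorial r : ℚ) * (Nat.factorial (s - r) : ℚ)
            = (Nat.factorial s : ℚ) := by
          exact_mod_cast congrArg (Nat.cast : ℕ → ℚ)
            (Nat.choose_mul_factorial_mul_factorial hr)
        have hr0 : (Nat.factorial r : ℚ) ≠ 0 := by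
          exact_mod_cast Nat.factorial_ne_zero r
        rw [nsmul_eq_mul]
        field_simp
        linear_combination (-(n : ℚ)) ^ r * hc
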